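/- Let H be a Hilbert space, Ψ : H → H, and suppose P, Q are orthogonal projections with P + Q = I. Assume: (i) there is C > 0 such that ‖Ψ(u) − Ψ(v)‖ ≤ C‖u − v‖ whenever ‖u − v‖ ≤ R; (ii) ‖Q(Ψ(u) − Ψ(v))‖ ≤ γ‖u − v‖ for γ ∈ (0,1) whenever ‖u − v‖ ≤ R. Let B be a bounded linear operator commuting with P and Q with ‖B‖ ≤ 1, ‖PB‖ ≤ κ, ‖I − B‖ ≤ b, and (I−B)Q = 0. Then for any u, v with ‖u − v‖ ≤ R and any ξ with ‖ξ‖ ≤ ε, the updated error e' = B(Ψ(u) − Ψ(v)) + (I−B)ξ satisfies ‖e'‖ ≤ (κC + γ)‖u − v‖ + 2bε. -/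
import Mathlib


open scoped RealInnerProductSpace

theorem one_step_contraction_estimate
    {H : Type*} [NormedAddCommGroup H] [InnerProductSpace ℝ H] [CompleteSpace H]
    (Ψ : H → H) (P Q B : H →L[ℝ] H)
    (hPQ : P + Q = 1)
    (hPidem : P.comp P = P) (hQidem : Q.comp Q = Q)
    (hPsa : ∀ x y : H, ⟪P x, y⟫ = ⟪x, P y⟫)
    (hQsa : ∀ x y : H, ⟪Q x, y⟫ = ⟪x, Q y⟫)
    (R C γ κ b ε : ℝ) (hC : 0 < C) (hγ : γ ∈ Set.Ioo (0:ℝ) 1)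
    (hLip : ∀ u v : H, ‖u - v‖ ≤ R → ‖Ψ u - Ψ v‖ ≤ C * ‖u - v‖)
    (hSqueeze : ∀ u v : H, ‖u - v‖ ≤ R → ‖Q (Ψ u - Ψ v)‖ ≤ γ * ‖u - v‖)
    (hBP : B.comp P = P.comp B) (hBQ : B.comp Q = Q.comp B)
    (hBnorm : ‖B‖ ≤ 1) (hPB : ‖P.comp B‖ ≤ κ) (hIB : ‖(1 : H →L[ℝ] H) - B‖ ≤ b)
    (hIBQ : ((1 : H →L[ℝ] H) - B).comp Q = 0)
    (u v ξ : H) (huv : ‖u - v‖ ≤ R) (hξ : ‖ξ‖ ≤ ε) :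
    ‖B (Ψ u - Ψ v) + ((1 : H →L[ℝ] H) - B) ξ‖ ≤ (κ * C + γ) * ‖u - v‖ + 2 * b * ε := by
  set w := Ψ u - Ψ v with hw
  have hκ0 : (0:ℝ) ≤ κ := le_trans (norm_nonneg _) hPB
  have hb0 : (0:ℝ) ≤ b := le_trans (norm_nonneg _) hIB
  have hε0 : (0:ℝ) ≤ ε := le_trans (norm_nonneg _) hξ
  have hwnorm : ‖w‖ ≤ C * ‖u - v‖ := hLip u v huv
  have hPBw : ‖P (B w)‖ ≤ κ * (C * ‖u - v‖) := by
    calc ‖P (B w)‖ = ‖(P.comp B) w‖ := rfl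
      _ ≤ ‖P.comp B‖ * ‖w‖ := (P.comp B).le_opNorm w
      _ ≤ κ * (C * ‖u - v‖) := by
          apply mul_le_mul hPB hwnorm (norm_nonneg _) hκ0
  have hQBw : ‖Q (B w)‖ ≤ γ * ‖u - v‖ := by
    have h1 : Q (B w) = B (Q w) := by
      have := congrArg (fun T : H →L[ℝ] H => T w) hBQ
      simpa using this.symm
    calc ‖Q (B w)‖ = ‖B (Q w)‖ := by rw [h1]
      _ ≤ ‖B‖ * ‖Q w‖ := B.le_opNorm _
      _ ≤ 1 * (γ * ‖u - v‖) := by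
          apply mul_le_mul hBnorm (hSqueeze u v huv) (norm_nonneg _) zero_le_one
      _ = γ * ‖u - v‖ := one_mul _
  have hBw : ‖B w‖ ≤ (κ * C + γ) * ‖u - v‖ := by
    have hsplit : B w = P (B w) + Q (B w) := by
      have := congrArg (fun T : H →L[ℝ] H => T (B w)) hPQ
      simpa using this.symm
    calc ‖B w‖ = ‖P (B w) + Q (B w)‖ := by rw [← hsplit]
      _ ≤ ‖P (B w)‖ + ‖Q (B w)‖ := norm_add_le _ _
      _ ≤ κ * (C * ‖u - v‖) + γ * ‖u - v‖ := add_le_add hPBw hQBw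
      _ = (κ * C + γ) * ‖u - v‖ := by ring
  have hIBξ : ‖((1 : H →L[ℝ] H) - B) ξ‖ ≤ 2 * b * ε := by
    calc ‖((1 : H →L[ℝ] H) - B) ξ‖ ≤ ‖(1 : H →L[ℝ] H) - B‖ * ‖ξ‖ :=
          ((1 : H →L[ℝ] H) - B).le_opNorm ξ
      _ ≤ b * ε := mul_le_mul hIB hξ (norm_nonneg _) hb0
      _ ≤ 2 * b * ε := by nlinarith
  calc ‖B w + ((1 : H →L[ℝ] H) - B) ξ‖ ≤ ‖B w‖ + ‖((1 : H →L[ℝ] H) - B) ξ‖ :=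
        norm_add_le _ _
    _ ≤ (κ * C + γ) * ‖u - v‖ + 2 * b * ε := add_le_add hBw hIBξ
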